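/- Let E_S > 0, M ≥ 1, and λ_1 = ... = λ_M = λ. As λ → ∞, the unique fixed point d*(λ) of d = ρ(d)/(1-ρ(d)) with ρ(d) = E_S·Σ_i λ/(1+λd) converges to d∞ = (E_S·M/2)·(1 + √(1 + 4/(M·E_S))), which is the unique positive solution of d = E_S·M/(d - E_S·M). -/

import Mathlib

open Set Filter

set_option maxHeartbeats 1000000 in
theorem multicast_fixed_point_limit
    (M : ℕ) (hM : 1 ≤ M) (ES : ℝ) (hES : 0 < ES)
    (ρ : ℝ → ℝ → ℝ)
    (hρ : ∀ lam d, ρ lam d = ES * (M : ℝ) * lam / (1 + lam * d))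
    (dstar : ℝ → ℝ)
    (hfix : ∀ lam, 0 < lam →
      0 < dstar lam ∧ ρ lam (dstar lam) < 1 ∧
      dstar lam = ρ lam (dstar lam) / (1 - ρ lam (dstar lam)))
    (dinf : ℝ)
    (hdinf : dinf = (ES * M / 2) * (1 + Real.sqrt (1 + 4 / ((M : ℝ) * ES)))) :
    Tendsto dstar atTop (nhds dinf) ∧
    (0 < dinf ∧ dinf = ES * M / (dinf - ES * M)) ∧
    (∀ d : ℝ, 0 < d → d = ES * M / (d - ES * M) → d = dinf) := by
  have hMpos : (0:ℝ) < (M:ℝ) := by exact_mod_cast Nat.lt_of_lt_of_le Nat.zero_lt_one hM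
  set a : ℝ := ES * (M:ℝ) with ha_def
  have ha : 0 < a := by positivity
  set s : ℝ := Real.sqrt (1 + 4 / ((M:ℝ) * ES)) with hs_def
  have hMES : (M:ℝ) * ES = a := by rw [ha_def]; ring
  have h14 : (0:ℝ) ≤ 1 + 4 / ((M:ℝ) * ES) := by positivity
  have hs2 : s^2 = 1 + 4 / a := by
    rw [hs_def, Real.sq_sqrt h14, hMES]
  have h4a : a * (4 / a) = 4 := by field_simp
  have hs_nonneg : 0 ≤ s := Real.sqrt_nonneg _
  have hs1 : 1 < s := by nlinarith [div_pos (by norm_num : (0:ℝ) < 4) ha]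
  have hdinf' : dinf = a * (1 + s) / 2 := by rw [hdinf]; ring
  have hdinf_pos : 0 < dinf := by rw [hdinf']; positivity
  have hdinf_gt : a < dinf := by rw [hdinf']; nlinarith
  have hprod : dinf * (dinf - a) = a := by
    rw [hdinf']; linear_combination (a^2/4)*hs2 + (a/4)*h4a
  have hfix_eq : dinf = a / (dinf - a) := by
    rw [eq_div_iff (by linarith : dinf - a ≠ 0)]; linarith [hprod]
  -- uniqueness
  have huniq : ∀ d : ℝ, 0 < d → d = a / (d - a) → d = dinf := by
    intro d hd hde
    have hda : d ≠ a := by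
      intro h
      rw [h, sub_self, div_zero] at hde
      exact absurd hde ha.ne'
    have hprod' : d * (d - a) = a := by
      have := (div_eq_iff (sub_ne_zero.mpr hda)).mp hde.symm
      linarith [this]
    nlinarith [hprod, hprod', hdinf_gt, hd, ha]
  -- formula for dstar
  have hform : ∀ lam : ℝ, 0 < lam →
      dstar lam = ((a - 1/lam) + Real.sqrt ((a - 1/lam)^2 + 4*a)) / 2 := by
    intro lam hl
    obtain ⟨hd, hρ1, hde⟩ := hfix lam hl
    set d := dstar lam with hd_def
    have hρd : ρ lam d = a * lam / (1 + lam * d) := by rw [hρ]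
    have h1d : 0 < 1 + lam * d := by positivity
    rw [hρd] at hde hρ1
    have hlt : a * lam < 1 + lam * d := (div_lt_one h1d).mp hρ1
    have hpos2 : 0 < 1 + lam * d - a * lam := by linarith
    have hne : 1 - a * lam / (1 + lam * d) ≠ 0 := (sub_pos.mpr hρ1).ne'
    have hrw : a * lam / (1 + lam * d) / (1 - a * lam / (1 + lam * d))
        = a * lam / (1 + lam * d - a * lam) := by
      field_simp
    have hde2 : d = a * lam / (1 + lam * d - a * lam) := hde.trans hrw
    have hde' : a * lam = d * (1 + lam * d - a * lam) :=
      (div_eq_iff hpos2.ne').mp hde2.symm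
    set b : ℝ := a - 1/lam with hb_def
    have key : d^2 - b*d - a = 0 := by
      have hl' : lam ≠ 0 := hl.ne'
      field_simp [hb_def]
      linear_combination (norm := skip) (-1/lam)*hde'
      rw [hb_def]
      field_simp
      ring
    have hge : 0 < 2*d - b := by
      by_contra h
      push_neg at h
      nlinarith [mul_nonneg hd.le (by linarith : (0:ℝ) ≤ b - 2*d)]
    have hsqrt : Real.sqrt (b^2 + 4*a) = 2*d - b := by
      rw [show b^2 + 4*a = (2*d - b)^2 by linear_combination (-4)*key]
      exact Real.sqrt_sq hge.le
    rw [hsqrt]; ring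
  -- limit
  have hsab : Real.sqrt (a^2 + 4*a) = a * s := by
    rw [show a^2 + 4*a = (a*s)^2 by nlinarith [hs2, h4a]]
    exact Real.sqrt_sq (by positivity)
  have hdinf2 : dinf = (a + Real.sqrt (a^2 + 4*a)) / 2 := by
    rw [hsab, hdinf']; ring
  have hb_tend : Tendsto (fun lam : ℝ => a - 1/lam) atTop (nhds a) := by
    have h0 : Tendsto (fun lam : ℝ => 1/lam) atTop (nhds 0) := by
      simpa [one_div] using tendsto_inv_atTop_zero
    simpa using tendsto_const_nhds.sub h0
  have hsq_tend : Tendsto (fun lam : ℝ => Real.sqrt ((a - 1/lam)^2 + 4*a)) atTop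
      (nhds (Real.sqrt (a^2 + 4*a))) :=
    ((hb_tend.pow 2).add tendsto_const_nhds).sqrt
  have hg_tend : Tendsto (fun lam : ℝ => ((a - 1/lam) + Real.sqrt ((a - 1/lam)^2 + 4*a)) / 2)
      atTop (nhds dinf) := by
    rw [hdinf2]
    exact (hb_tend.add hsq_tend).div_const 2
  have htend : Tendsto dstar atTop (nhds dinf) := by
    apply hg_tend.congr'
    filter_upwards [eventually_gt_atTop 0] with lam hl
    exact (hform lam hl).symm
  exact ⟨htend, ⟨hdinf_pos, hfix_eq⟩, fun d hd hde => huniq d hd hde⟩
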